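/- arXiv:2406.13566 — 2 statements merged into one kernel-verified Lean document; each statement's English description precedes it below -/
import Mathlib

section
/- Let δ ∈ (0, 1/2] and let B be a symmetric real d×d matrix. Then trace(B − g_δ(B)) ≥ (1/2)|B|, where |B| is the Frobenius norm of B. -/
open Matrix

/-- The Frobenius norm of a real matrix. -/
noncomputable def frobNorm {d : ℕ} (A : Matrix (Fin d) (Fin d) ℝ) : ℝ :=
  Real.sqrt (∑ i, ∑ j, (A i j) ^ 2)

/-- The matrix obtained by applying a scalar function `F : ℝ → ℝ` to the spectrum of a
symmetric (Hermitian) real matrix `B`. -/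
noncomputable def specApply {d : ℕ} (F : ℝ → ℝ) {B : Matrix (Fin d) (Fin d) ℝ}
    (hB : B.IsHermitian) : Matrix (Fin d) (Fin d) ℝ :=
  (hB.eigenvectorUnitary : Matrix (Fin d) (Fin d) ℝ) *
    Matrix.diagonal (fun i => F (hB.eigenvalues i)) *
    star (hB.eigenvectorUnitary : Matrix (Fin d) (Fin d) ℝ)

/-- The regularised logarithm `g_δ`. -/
noncomputable def gReg (δ : ℝ) (s : ℝ) : ℝ :=
  if s < δ then s / δ + Real.log δ - 1 else Real.log s

lemma star_mul_self_eigU {d : ℕ} {B : Matrix (Fin d) (Fin d) ℝ} (hB : B.IsHermitian) :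
    star (hB.eigenvectorUnitary : Matrix (Fin d) (Fin d) ℝ) *
      (hB.eigenvectorUnitary : Matrix (Fin d) (Fin d) ℝ) = 1 :=
  (Matrix.mem_unitaryGroup_iff'.mp hB.eigenvectorUnitary.2)

lemma trace_specApply {d : ℕ} (F : ℝ → ℝ) {B : Matrix (Fin d) (Fin d) ℝ}
    (hB : B.IsHermitian) :
    (specApply F hB).trace = ∑ i, F (hB.eigenvalues i) := by
  rw [specApply, Matrix.trace_mul_cycle, star_mul_self_eigU hB, one_mul,
    Matrix.trace_diagonal]

lemma spec_apply_id {d : ℕ} {B : Matrix (Fin d) (Fin d) ℝ} (hB : B.IsHermitian) :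
    B = specApply id hB := by
  have := hB.spectral_theorem
  simpa [specApply, Function.comp] using this

/-- scalar lemma: log s ≤ s/2 for s > 0 -/
lemma log_le_half (s : ℝ) (hs : 0 < s) : Real.log s ≤ s / 2 := by
  have h1 : Real.log (Real.sqrt s) ≤ Real.sqrt s - 1 :=
    Real.log_le_sub_one_of_pos (Real.sqrt_pos.mpr hs)
  have h2 : Real.log (Real.sqrt s) = Real.log s / 2 := Real.log_sqrt hs.le
  have h3 : Real.sqrt s ^ 2 = s := Real.sq_sqrt hs.le
  nlinarith [sq_nonneg (Real.sqrt s - 2)]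

/-- key scalar inequality -/
lemma key_scalar (δ : ℝ) (hδ0 : 0 < δ) (hδ1 : δ ≤ 1/2) (s : ℝ) :
    |s| / 2 ≤ s - gReg δ s := by
  rw [gReg]
  split_ifs with h
  · -- s < δ
    have hlog : Real.log δ ≤ Real.log (1/2) := Real.log_le_log hδ0 hδ1
    have hl2 : Real.log (1/2) = -Real.log 2 := by
      rw [one_div, Real.log_inv]
    have hlog2 : (0:ℝ) < Real.log 2 := Real.log_pos (by norm_num)
    rcases le_or_gt 0 s with hs | hs
    · rw [abs_of_nonneg hs]
      have h1 : s / δ ≤ 1 := by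
        rw [div_le_one hδ0]; exact h.le
      have h2 : s ≤ 1/2 := h.le.trans hδ1
      nlinarith
    · rw [abs_of_neg hs]
      have h1 : s / δ ≤ 2 * s := by
        rw [div_le_iff₀ hδ0] at *
        nlinarith
      nlinarith
  · -- δ ≤ s
    push_neg at h
    have hs : 0 < s := lt_of_lt_of_le hδ0 h
    rw [abs_of_pos hs]
    have := log_le_half s hs
    linarith

/-- For `δ ∈ (0, 1/2]` and a symmetric real `d × d` matrix `B`,
`trace (B - g_δ(B)) ≥ (1/2) |B|`, where `|B|` is the Frobenius norm. -/
theorem trace_sub_gReg_ge_half_frobNorm {d : ℕ} (hd : 0 < d) (δ : ℝ)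
    (hδ : δ ∈ Set.Ioc (0:ℝ) (1/2)) (B : Matrix (Fin d) (Fin d) ℝ) (hB : B.IsHermitian) :
    (1 / 2) * frobNorm B ≤ (B - specApply (gReg δ) hB).trace := by
  obtain ⟨hδ0, hδ1⟩ := hδ
  -- Frobenius norm squared equals trace (B*B) equals sum of squares of eigenvalues
  have hsym : ∀ i j, B j i = B i j := by
    intro i j
    conv_lhs => rw [← hB]
    simp [Matrix.conjTranspose_apply]
  have htr2 : ∑ i, ∑ j, (B i j) ^ 2 = (B * B).trace := by
    rw [Matrix.trace]
    apply Finset.sum_congr rfl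
    intro i _
    rw [Matrix.diag_apply, Matrix.mul_apply]
    apply Finset.sum_congr rfl
    intro j _
    rw [hsym i j, sq]
  have hcan : ∀ z : Matrix (Fin d) (Fin d) ℝ,
      star (hB.eigenvectorUnitary : Matrix (Fin d) (Fin d) ℝ) *
        ((hB.eigenvectorUnitary : Matrix (Fin d) (Fin d) ℝ) * z) = z := by
    intro z
    rw [← mul_assoc, star_mul_self_eigU hB, one_mul]
  have hBB : B * B = specApply (fun s => s ^ 2) hB := by
    conv_lhs => rw [spec_apply_id hB]
    simp only [specApply]
    simp only [mul_assoc, hcan]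
    simp only [← mul_assoc, Matrix.diagonal_mul_diagonal]
    simp [sq]
  have hfrob : frobNorm B = Real.sqrt (∑ i, (hB.eigenvalues i) ^ 2) := by
    rw [frobNorm, htr2, hBB, trace_specApply]
  -- sqrt(Σ λ²) ≤ Σ |λ|
  have h1 : frobNorm B ≤ ∑ i, |hB.eigenvalues i| := by
    rw [hfrob]
    have h2 : ∑ i, (hB.eigenvalues i) ^ 2 ≤ (∑ i, |hB.eigenvalues i|) ^ 2 := by
      calc ∑ i, (hB.eigenvalues i) ^ 2 = ∑ i, |hB.eigenvalues i| ^ 2 := by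
            simp [sq_abs]
        _ ≤ (∑ i, |hB.eigenvalues i|) ^ 2 :=
            Finset.sum_sq_le_sq_sum_of_nonneg (fun i _ => abs_nonneg _)
    calc Real.sqrt (∑ i, (hB.eigenvalues i) ^ 2)
        ≤ Real.sqrt ((∑ i, |hB.eigenvalues i|) ^ 2) := Real.sqrt_le_sqrt h2
      _ = ∑ i, |hB.eigenvalues i| :=
          Real.sqrt_sq (Finset.sum_nonneg fun i _ => abs_nonneg _)
  -- trace side
  have htr : (B - specApply (gReg δ) hB).trace
      = ∑ i, (hB.eigenvalues i - gReg δ (hB.eigenvalues i)) := by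
    have hBtr := congrArg Matrix.trace (spec_apply_id hB)
    rw [trace_specApply] at hBtr
    rw [Matrix.trace_sub, trace_specApply, hBtr, ← Finset.sum_sub_distrib]
    simp
  rw [htr]
  calc (1/2) * frobNorm B ≤ (1/2) * ∑ i, |hB.eigenvalues i| := by linarith
    _ = ∑ i, |hB.eigenvalues i| / 2 := by
        rw [Finset.mul_sum]; apply Finset.sum_congr rfl; intros; ring
    _ ≤ ∑ i, (hB.eigenvalues i - gReg δ (hB.eigenvalues i)) :=
        Finset.sum_le_sum fun i _ => key_scalar δ hδ0 hδ1 _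
end

section
/- Let B₀ and B₁ be positive definite symmetric real d×d matrices with B₀ ≠ B₁. Then the denominator (B₁ − B₀) : (B₀⁻¹ − B₁⁻¹) is strictly positive, and the quantity λ = [ln det B₀ − ln det B₁ + B₁ : (B₀⁻¹ − B₁⁻¹)] / [(B₁ − B₀) : (B₀⁻¹ − B₁⁻¹)] satisfies 0 ≤ λ ≤ 1. -/
open Matrix

/-- The Frobenius inner product of two real matrices. -/
noncomputable def frobInner {d : ℕ} (A C : Matrix (Fin d) (Fin d) ℝ) : ℝ :=
  ∑ i, ∑ j, A i j * C i j

private lemma frobInner_eq_trace {d : ℕ} (A C : Matrix (Fin d) (Fin d) ℝ) :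
    frobInner A C = (Aᵀ * C).trace := by
  simp only [frobInner, Matrix.trace, Matrix.diag, Matrix.mul_apply, Matrix.transpose_apply]
  exact Finset.sum_comm


open scoped MatrixOrder in
lemma key {d : ℕ} {A B : Matrix (Fin d) (Fin d) ℝ} (hA : A.PosDef) (hB : B.PosDef)
    (hne : A ≠ B) : (d : ℝ) < Real.log A.det - Real.log B.det + (A⁻¹ * B).trace := by
  classical
  have hAinv : (A⁻¹).PosDef := hA.inv
  set S := CFC.sqrt (A⁻¹) with hSdef
  have hS : S.PosSemidef := (CFC.sqrt_nonneg (A⁻¹)).posSemidef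
  have hSS : S * S = A⁻¹ := CFC.sqrt_mul_sqrt_self (A⁻¹) hAinv.posSemidef.nonneg
  have hAdet : IsUnit A.det := isUnit_iff_ne_zero.mpr hA.det_pos.ne'
  have hSsymm : Sᴴ = S := hS.isHermitian
  have hSdetne : S.det ≠ 0 := by
    intro h
    have : (A⁻¹).det = 0 := by rw [← hSS, det_mul, h, mul_zero]
    exact hAinv.det_pos.ne' this
  have hSunit : IsUnit S.det := isUnit_iff_ne_zero.mpr hSdetne
  set M := S * B * S with hMdef
  have hM : M.PosDef := by
    refine PosDef.of_dotProduct_mulVec_pos ?_ ?_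
    · have := isHermitian_conjTranspose_mul_mul S hB.isHermitian
      rwa [hSsymm] at this
    · intro x hx
      have hSx : S *ᵥ x ≠ 0 := by
        intro h
        apply hx
        have := congrArg (fun v => S⁻¹ *ᵥ v) h
        simpa [mulVec_mulVec, nonsing_inv_mul S hSunit] using this
      have := hB.dotProduct_mulVec_pos hSx
      simpa only [hMdef, star_mulVec, dotProduct_mulVec, vecMul_vecMul, hSsymm] using this
  -- M ≠ 1
  have hMne : M ≠ 1 := by
    intro h
    apply hne
    have hB' : S⁻¹ * M * S⁻¹ = B := by
      rw [hMdef, ← mul_assoc, ← mul_assoc, nonsing_inv_mul S hSunit, one_mul, mul_assoc,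
        mul_nonsing_inv S hSunit, mul_one]
    rw [h, mul_one] at hB'
    rw [← hB', ← Matrix.mul_inv_rev, hSS, nonsing_inv_nonsing_inv A hAdet]
  set μ := hM.isHermitian.eigenvalues with hmu
  have hμpos : ∀ i, 0 < μ i := hM.eigenvalues_pos
  have hdet : M.det = ∏ i, μ i := by
    have := hM.isHermitian.det_eq_prod_eigenvalues
    simpa using this
  have htrace : M.trace = ∑ i, μ i := by
    conv_lhs => rw [hM.isHermitian.spectral_theorem]
    rw [Unitary.conjStarAlgAut_apply, Matrix.trace_mul_cycle,
      mem_unitaryGroup_iff'.mp (hM.isHermitian.eigenvectorUnitary).2, one_mul, trace_diagonal]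
    simp [hmu]
  have hex : ∃ i, μ i ≠ 1 := by
    by_contra hall
    push_neg at hall
    apply hMne
    have hdiag : diagonal (RCLike.ofReal ∘ hM.isHermitian.eigenvalues) =
        (1 : Matrix (Fin d) (Fin d) ℝ) := by
      rw [show (RCLike.ofReal ∘ hM.isHermitian.eigenvalues : Fin d → ℝ) = fun _ => (1:ℝ) from
        funext fun i => by simpa [Function.comp] using hall i, diagonal_one]
    have : M = (hM.isHermitian.eigenvectorUnitary : Matrix (Fin d) (Fin d) ℝ) * 1 *
        (star (hM.isHermitian.eigenvectorUnitary : Matrix (Fin d) (Fin d) ℝ)) := by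
      conv_lhs => rw [hM.isHermitian.spectral_theorem]
      rw [hdiag, Unitary.conjStarAlgAut_apply]
    rw [mul_one, mem_unitaryGroup_iff.mp (hM.isHermitian.eigenvectorUnitary).2] at this
    exact this
  -- core inequality : d < trace M - log det M
  have hlogdet : Real.log M.det = ∑ i, Real.log (μ i) := by
    rw [hdet, Real.log_prod (fun i _ => (hμpos i).ne')]
  have hcore : (d : ℝ) < M.trace - Real.log M.det := by
    rw [htrace, hlogdet, ← Finset.sum_sub_distrib]
    obtain ⟨i₀, hi₀⟩ := hex
    calc (d : ℝ) = ∑ _i : Fin d, (1 : ℝ) := by simp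
    _ < ∑ i, (μ i - Real.log (μ i)) := by
        apply Finset.sum_lt_sum
        · intro i _
          have := Real.log_le_sub_one_of_pos (hμpos i)
          linarith
        · exact ⟨i₀, Finset.mem_univ _, by
            have := Real.log_lt_sub_one_of_pos (hμpos i₀) hi₀
            linarith⟩
  -- transfer back
  have htr2 : M.trace = (A⁻¹ * B).trace := by
    rw [hMdef, Matrix.trace_mul_cycle, hSS]
  have hdet2 : Real.log M.det = Real.log B.det - Real.log A.det := by
    have hMdet : M.det = (A.det)⁻¹ * B.det := by
      calc M.det = S.det * B.det * S.det := by rw [hMdef, det_mul, det_mul]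
      _ = (S.det * S.det) * B.det := by ring
      _ = (S * S).det * B.det := by rw [det_mul]
      _ = (A⁻¹).det * B.det := by rw [hSS]
      _ = (A.det)⁻¹ * B.det := by rw [det_nonsing_inv, Ring.inverse_eq_inv']
    rw [hMdet, Real.log_mul (inv_ne_zero hA.det_pos.ne') hB.det_pos.ne', Real.log_inv]
    ring
  rw [htr2, hdet2] at hcore
  linarith


/-- For positive definite symmetric real `d × d` matrices `B₀ ≠ B₁`, the denominator
`(B₁ - B₀) : (B₀⁻¹ - B₁⁻¹)` is strictly positive, and the interpolation weight
`λ = [ln det B₀ - ln det B₁ + B₁ : (B₀⁻¹ - B₁⁻¹)] / [(B₁ - B₀) : (B₀⁻¹ - B₁⁻¹)]`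
satisfies `0 ≤ λ ≤ 1`. -/
theorem interpolation_weight_mem_Icc {d : ℕ} (hd : 0 < d) (B₀ B₁ : Matrix (Fin d) (Fin d) ℝ)
    (h₀ : B₀.PosDef) (h₁ : B₁.PosDef) (hne : B₀ ≠ B₁) :
    0 < frobInner (B₁ - B₀) (B₀⁻¹ - B₁⁻¹) ∧
      (Real.log B₀.det - Real.log B₁.det + frobInner B₁ (B₀⁻¹ - B₁⁻¹)) /
          frobInner (B₁ - B₀) (B₀⁻¹ - B₁⁻¹) ∈ Set.Icc (0:ℝ) 1 := by
  have hs₀ : B₀ᵀ = B₀ := by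
    rw [← conjTranspose_eq_transpose_of_trivial]; exact h₀.isHermitian
  have hs₁ : B₁ᵀ = B₁ := by
    rw [← conjTranspose_eq_transpose_of_trivial]; exact h₁.isHermitian
  have hu₀ : IsUnit B₀.det := isUnit_iff_ne_zero.mpr h₀.det_pos.ne'
  have hu₁ : IsUnit B₁.det := isUnit_iff_ne_zero.mpr h₁.det_pos.ne'
  have e1 : frobInner B₁ (B₀⁻¹ - B₁⁻¹) = (B₀⁻¹ * B₁).trace - d := by
    rw [frobInner_eq_trace, hs₁, mul_sub, trace_sub, mul_nonsing_inv B₁ hu₁, trace_one,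
      Matrix.trace_mul_comm]
    simp
  have e2 : frobInner (B₁ - B₀) (B₀⁻¹ - B₁⁻¹) =
      ((B₀⁻¹ * B₁).trace - d) + ((B₁⁻¹ * B₀).trace - d) := by
    have expand : (B₁ - B₀) * (B₀⁻¹ - B₁⁻¹) =
        B₁ * B₀⁻¹ - B₁ * B₁⁻¹ - (B₀ * B₀⁻¹ - B₀ * B₁⁻¹) := by noncomm_ring
    rw [frobInner_eq_trace, transpose_sub, hs₀, hs₁, expand, trace_sub, trace_sub, trace_sub,
      mul_nonsing_inv B₁ hu₁, mul_nonsing_inv B₀ hu₀, trace_one,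
      Matrix.trace_mul_comm B₁ B₀⁻¹, Matrix.trace_mul_comm B₀ B₁⁻¹]
    simp only [Fintype.card_fin]
    ring
  have k1 := key h₀ h₁ hne
  have k2 := key h₁ h₀ hne.symm
  have hN : 0 < Real.log B₀.det - Real.log B₁.det + frobInner B₁ (B₀⁻¹ - B₁⁻¹) := by
    rw [e1]; linarith
  have hD : 0 < frobInner (B₁ - B₀) (B₀⁻¹ - B₁⁻¹) := by
    rw [e2]; linarith
  have hND : Real.log B₀.det - Real.log B₁.det + frobInner B₁ (B₀⁻¹ - B₁⁻¹) ≤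
      frobInner (B₁ - B₀) (B₀⁻¹ - B₁⁻¹) := by
    rw [e1, e2]; linarith
  exact ⟨hD, ⟨div_nonneg hN.le hD.le, (div_le_one hD).mpr hND⟩⟩
end
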